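/- A finitely generated free group is Hopfian: every surjective endomorphism of a finitely generated free group is an automorphism. -/

import Mathlib

open FreeGroup

namespace Stmt6Aux

open scoped Classical

variable {α : Type*}

/-- In a reduced word, no letter is immediately followed by its inverse. -/
lemma no_adj {L : List (α × Bool)} (hL : reduce L = L) {i : ℕ} {x : α} {b : Bool}
    (h1 : L[i]? = some (x, b)) (h2 : L[i+1]? = some (x, !b)) : False := by
  obtain ⟨hi1, e1⟩ := List.getElem?_eq_some_iff.1 h1
  obtain ⟨hi2, e2⟩ := List.getElem?_eq_some_iff.1 h2
  have hdecomp : L = L.take i ++ (x, b) :: (x, !b) :: L.drop (i + 2) := by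
    conv_lhs => rw [← List.take_append_drop i L, List.drop_eq_getElem_cons hi1,
      List.drop_eq_getElem_cons hi2, e1, e2]
  exact FreeGroup.reduce.not (hL.trans hdecomp)

variable (L : List (α × Bool)) (a : α)

/-- domain predicate -/
def P (j : Fin (L.length + 1)) : Prop :=
  (1 ≤ j.val ∧ L[j.val - 1]? = some (a, true)) ∨ L[j.val]? = some (a, false)

/-- codomain predicate -/
def Q (k : Fin (L.length + 1)) : Prop :=
  L[k.val]? = some (a, true) ∨ (1 ≤ k.val ∧ L[k.val - 1]? = some (a, false))

variable (hL : reduce L = L)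

lemma bound_of_getElem? {i : ℕ} {u : α × Bool} (h : L[i]? = some u) : i < L.length :=
  (List.getElem?_eq_some_iff.1 h).1

/-- the partial bijection -/
noncomputable def E : { j // P L a j } ≃ { k // Q L a k } where
  toFun j :=
    if h : 1 ≤ j.1.val ∧ L[j.1.val - 1]? = some (a, true) then
      ⟨⟨j.1.val - 1, by omega⟩, Or.inl (by simpa using h.2)⟩
    else
      have hf : L[j.1.val]? = some (a, false) := j.2.resolve_left h
      ⟨⟨j.1.val + 1, by have := bound_of_getElem? L hf; omega⟩,
        Or.inr ⟨by show 1 ≤ j.1.val + 1; omega, by simpa using hf⟩⟩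
  invFun k :=
    if h : L[k.1.val]? = some (a, true) then
      ⟨⟨k.1.val + 1, by have := bound_of_getElem? L h; omega⟩,
        Or.inl ⟨by show 1 ≤ k.1.val + 1; omega, by simpa using h⟩⟩
    else
      have hf : 1 ≤ k.1.val ∧ L[k.1.val - 1]? = some (a, false) := k.2.resolve_left h
      ⟨⟨k.1.val - 1, by omega⟩, Or.inr (by simpa using hf.2)⟩
  left_inv := by
    rintro ⟨j, hj⟩
    by_cases h : 1 ≤ j.val ∧ L[j.val - 1]? = some (a, true)
    · simp only [dif_pos h]
      rw [dif_pos (by simpa using h.2)]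
      ext
      simp only []
      omega
    · simp only [dif_neg h]
      have hf : L[j.val]? = some (a, false) := hj.resolve_left h
      have hne : ¬ L[(j.val + 1 : ℕ)]? = some (a, true) := by
        intro hc
        exact no_adj hL hf (by simpa using hc)
      rw [dif_neg (by simpa using hne)]
      ext
      simp only []
      omega
  right_inv := by
    rintro ⟨k, hk⟩
    by_cases h : L[k.val]? = some (a, true)
    · simp only [dif_pos h]
      rw [dif_pos (show 1 ≤ (k.val + 1 : ℕ) ∧ L[(k.val + 1 : ℕ) - 1]? = some (a, true) from
        ⟨by omega, by simpa using h⟩)]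
      ext
      simp only []
      omega
    · simp only [dif_neg h]
      have hf : 1 ≤ k.val ∧ L[k.val - 1]? = some (a, false) := hk.resolve_left h
      have hne : ¬ (1 ≤ (k.val - 1 : ℕ) ∧ L[(k.val - 1 : ℕ) - 1]? = some (a, true)) := by
        rintro ⟨h1, h2⟩
        refine no_adj hL h2 ?_
        have : k.val - 1 - 1 + 1 = k.val - 1 := by omega
        rw [this]
        simpa using hf.2
      rw [dif_neg (by simpa using hne)]
      ext
      simp only []
      omega

/-- the permutation associated to the generator `a` -/
noncomputable def sigma : Equiv.Perm (Fin (L.length + 1)) :=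
  (E L a hL).extendSubtype

lemma sigma_down {j : Fin (L.length + 1)} (h1 : 1 ≤ j.val)
    (h2 : L[j.val - 1]? = some (a, true)) :
    sigma L a hL j = ⟨j.val - 1, by omega⟩ := by
  have hp : P L a j := Or.inl ⟨h1, h2⟩
  rw [sigma, Equiv.extendSubtype_apply_of_mem _ j hp]
  rw [E]
  simp only [Equiv.coe_fn_mk]
  rw [dif_pos ⟨h1, h2⟩]

lemma sigma_up {j : Fin (L.length + 1)} (h2 : L[j.val]? = some (a, false)) :
    sigma L a hL j = ⟨j.val + 1, by have := bound_of_getElem? L h2; omega⟩ := by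
  have hp : P L a j := Or.inr h2
  rw [sigma, Equiv.extendSubtype_apply_of_mem _ j hp]
  rw [E]
  simp only [Equiv.coe_fn_mk]
  have h : ¬ (1 ≤ j.val ∧ L[j.val - 1]? = some (a, true)) := by
    rintro ⟨ha, hb⟩
    refine no_adj hL hb ?_
    have : j.val - 1 + 1 = j.val := by omega
    rw [this]
    simpa using h2
  rw [dif_neg h]

/-- Residual finiteness of free groups: a nontrivial element survives in some
finite symmetric group. -/
lemma exists_perm_hom {g : FreeGroup α} (hg : g ≠ 1) :
    ∃ (N : ℕ) (φ : FreeGroup α →* Equiv.Perm (Fin N)), φ g ≠ 1 := by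
  set L := g.toWord with hLdef
  have hL : reduce L = L := reduce_toWord g
  set n := L.length with hn
  set F : α × Bool → Equiv.Perm (Fin (n + 1)) :=
    fun x => cond x.2 (sigma L x.1 hL) (sigma L x.1 hL)⁻¹ with hF
  have step : ∀ i : ℕ, ∀ h : i < n,
      F (L[i]'h) ⟨i + 1, by omega⟩ = ⟨i, by omega⟩ := by
    intro i h
    rcases hx : L[i]'h with ⟨a, b⟩
    have hget : L[i]? = some (a, b) := by
      rw [List.getElem?_eq_getElem h, hx]
    cases b with
    | true =>
        simp only [hF, cond_true]
        rw [sigma_down L a hL (j := ⟨i + 1, by omega⟩) (by simp) (by simpa using hget)]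
        ext
        simp
    | false =>
        simp only [hF, cond_false]
        rw [Equiv.Perm.inv_eq_iff_eq]
        rw [sigma_up L a hL (j := ⟨i, by omega⟩) (by simpa using hget)]
  have key : ∀ m : ℕ, ∀ hm : m ≤ n,
      ((L.drop (n - m)).map F).prod ⟨n, by omega⟩ = ⟨n - m, by omega⟩ := by
    intro m
    induction m with
    | zero => intro _; simp [hn]
    | succ m ih =>
        intro hm
        have hlt : n - (m + 1) < n := by omega
        have hdrop : L.drop (n - (m + 1)) = (L[n - (m+1)]'hlt) :: L.drop (n - (m + 1) + 1) := by
          exact List.drop_eq_getElem_cons hlt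
        have hstep := step (n - (m + 1)) hlt
        have h1 : n - (m + 1) + 1 = n - m := by omega
        rw [hdrop, List.map_cons, List.prod_cons, Equiv.Perm.mul_apply, h1,
          ih (by omega)]
        have heq : (⟨n - (m + 1) + 1, by omega⟩ : Fin (n + 1)) = ⟨n - m, by omega⟩ :=
          Fin.ext h1
        rw [← heq]
        exact hstep
  refine ⟨n + 1, FreeGroup.lift (fun a => sigma L a hL), ?_⟩
  have hg' : FreeGroup.lift (fun a => sigma L a hL) g = (L.map F).prod := by
    conv_lhs => rw [← FreeGroup.mk_toWord (x := g)]
    rw [FreeGroup.lift_mk]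
  have hn1 : 1 ≤ n := by
    rcases Nat.eq_zero_or_pos n with h0 | h1
    · exfalso
      apply hg
      have : L = [] := List.length_eq_zero_iff.1 h0
      rw [← FreeGroup.mk_toWord (x := g), ← hLdef, this]
      rfl
    · exact h1
  intro hone
  have hkey := key n le_rfl
  simp only [Nat.sub_self, List.drop_zero] at hkey
  rw [← hg', hone] at hkey
  simp only [Equiv.Perm.one_apply] at hkey
  have : n = 0 := by simpa using congrArg Fin.val hkey
  omega

end Stmt6Aux

/-- Finitely generated free groups are Hopfian: every surjective endomorphism
of a finitely generated free group is an automorphism (i.e. bijective). -/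
theorem stmt_6 {α : Type*} [Finite α] (f : FreeGroup α →* FreeGroup α)
    (hf : Function.Surjective f) : Function.Bijective f := by
  refine ⟨?_, hf⟩
  rw [← MonoidHom.ker_eq_bot_iff, eq_bot_iff]
  intro g hg
  by_contra hgne
  have hg1 : f g = 1 := hg
  have hgne1 : g ≠ 1 := fun h => hgne (h ▸ Subgroup.one_mem _)
  obtain ⟨N, φ, hφ⟩ := Stmt6Aux.exists_perm_hom hgne1
  -- Mal'cev argument: precomposition with f is an injective self-map of the
  -- finite set of homomorphisms into the finite group `Equiv.Perm (Fin N)`.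
  have : Finite (FreeGroup α →* Equiv.Perm (Fin N)) := by
    have e : (FreeGroup α →* Equiv.Perm (Fin N)) ≃ (α → Equiv.Perm (Fin N)) :=
      FreeGroup.lift.symm
    exact Finite.of_equiv _ e.symm
  have hinj : Function.Injective
      (fun ψ : FreeGroup α →* Equiv.Perm (Fin N) => ψ.comp f) := by
    intro ψ₁ ψ₂ h
    exact (MonoidHom.cancel_right hf).1 h
  have hsurj := Finite.injective_iff_surjective.1 hinj
  obtain ⟨ψ, hψ⟩ := hsurj φ
  apply hφ
  have hψ' : ψ.comp f = φ := hψ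
  calc φ g = (ψ.comp f) g := by rw [hψ']
    _ = ψ (f g) := rfl
    _ = 1 := by rw [hg1]; exact ψ.map_one
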